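/- arXiv:1202.5980 — 2 statements merged into one kernel-verified Lean document; each statement's English description precedes it below -/
import Mathlib

section
/- Let T > 0, t₀ ∈ [0, T], x₀ ∈ ℝ^m. Let r : ℝ^m → ℝ^m and q : ℝ^m → ℝ^{m×m} be continuous with q(x) symmetric positive definite for every x, let h : ℝ^m → ℝ, and let Ū : [0,T] × ℝ^m → ℝ be continuously differentiable with ∂_s Ū(s,x) + ⟨r(x), ∇_x Ū(s,x)⟩ − (1/2)⟨∇_x Ū(s,x), q(x)∇_x Ū(s,x)⟩ ≥ 0 on (0,T) × ℝ^m and Ū(T,·) ≤ h. Then for every continuously differentiable path φ : [t₀, T] → ℝ^m with φ(t₀) = x₀, ∫_{t₀}^{T} [ (1/2)⟨φ'(s) − r(φ(s)), q(φ(s))⁻¹ (φ'(s) − r(φ(s)))⟩ − ⟨φ'(s) − r(φ(s)), ∇_x Ū(s, φ(s))⟩ − (1/2)⟨∇_x Ū(s, φ(s)), q(φ(s)) ∇_x Ū(s, φ(s))⟩ ] ds + 2 h(φ(T)) ≥ (1/2)∫_{t₀}^{T} ⟨φ'(s) − r(φ(s)), q(φ(s))⁻¹ (φ'(s) − r(φ(s)))⟩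 ds + h(φ(T)) + Ū(t₀, x₀). -/
open MeasureTheory
open scoped RealInnerProductSpace

/-- Action of an `m × m` real matrix on a vector of `EuclideanSpace ℝ (Fin m)`. -/
noncomputable def matVec {m : ℕ} (A : Matrix (Fin m) (Fin m) ℝ)
    (v : EuclideanSpace ℝ (Fin m)) : EuclideanSpace ℝ (Fin m) :=
  (EuclideanSpace.equiv (Fin m) ℝ).symm (A.mulVec (EuclideanSpace.equiv (Fin m) ℝ v))

lemma continuousOn_matVec {m : ℕ} {α : Type*} [TopologicalSpace α]
    {A : α → Matrix (Fin m) (Fin m) ℝ} {v : α → EuclideanSpace ℝ (Fin m)} {s : Set α}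
    (hA : ∀ i j, ContinuousOn (fun x => A x i j) s)
    (hv : ∀ j, ContinuousOn (fun x => v x j) s) :
    ContinuousOn (fun x => matVec (A x) (v x)) s := by
  unfold matVec
  apply ((EuclideanSpace.equiv (Fin m) ℝ).symm.continuous).comp_continuousOn
  apply continuousOn_pi.2
  intro i
  simp only [Matrix.mulVec, dotProduct]
  exact continuousOn_finset_sum _ fun j _ => (hA i j).mul (hv j)

lemma continuous_qinv {m : ℕ} (q : EuclideanSpace ℝ (Fin m) → Matrix (Fin m) (Fin m) ℝ)
    (hqc : ∀ i j, Continuous fun x => q x i j) (hqpd : ∀ x, (q x).PosDef) :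
    Continuous fun x => (q x)⁻¹ := by
  have hq : Continuous q := continuous_matrix hqc
  have hdet : Continuous fun x => (q x).det := hq.matrix_det
  simp only [Matrix.inv_def, Ring.inverse_eq_inv]
  exact (hdet.inv₀ fun x => (hqpd x).det_pos.ne').smul hq.matrix_adjugate

section calc1
variable {m : ℕ} {U : ℝ → EuclideanSpace ℝ (Fin m) → ℝ}
  (hU : ContDiff ℝ 1 (fun sx : ℝ × EuclideanSpace ℝ (Fin m) => U sx.1 sx.2))

local notation "E" => EuclideanSpace ℝ (Fin m)

include hU

lemma grad_eq (s : ℝ) (x : E) :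
    gradient (U s) x = (InnerProductSpace.toDual ℝ (EuclideanSpace ℝ (Fin m))).symm
      ((fderiv ℝ (fun sx : ℝ × EuclideanSpace ℝ (Fin m) => U sx.1 sx.2) (s, x)).comp
        (ContinuousLinearMap.inr ℝ ℝ (EuclideanSpace ℝ (Fin m)))) := by
  have hj : HasFDerivAt (fun y : E => ((s, y) : ℝ × E))
      (ContinuousLinearMap.inr ℝ ℝ (EuclideanSpace ℝ (Fin m))) x :=
    HasFDerivAt.prodMk (hasFDerivAt_const s x) (hasFDerivAt_id x)
  have hG : Differentiable ℝ (fun sx : ℝ × EuclideanSpace ℝ (Fin m) => U sx.1 sx.2) :=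
    hU.differentiable one_ne_zero
  have := ((hG (s, x)).hasFDerivAt.comp x hj).hasGradientAt
  exact this.gradient

lemma inner_grad_eq (s : ℝ) (x : E) (v : E) :
    ⟪gradient (U s) x, v⟫
      = fderiv ℝ (fun sx : ℝ × EuclideanSpace ℝ (Fin m) => U sx.1 sx.2) (s, x) (0, v) := by
  rw [grad_eq hU, InnerProductSpace.toDual_symm_apply]
  rfl

lemma partial_t_eq (s : ℝ) (x : E) :
    deriv (fun t => U t x) s
      = fderiv ℝ (fun sx : ℝ × EuclideanSpace ℝ (Fin m) => U sx.1 sx.2) (s, x) (1, 0) := by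
  have hc : HasDerivAt (fun t : ℝ => ((t, x) : ℝ × E)) ((1 : ℝ), (0 : E)) s :=
    HasDerivAt.prodMk (hasDerivAt_id s) (hasDerivAt_const s x)
  have hG : Differentiable ℝ (fun sx : ℝ × EuclideanSpace ℝ (Fin m) => U sx.1 sx.2) :=
    hU.differentiable one_ne_zero
  exact ((hG (s, x)).hasFDerivAt.comp_hasDerivAt s hc).deriv

end calc1

lemma stmt4_aux {t₀ T : ℝ} (htT : t₀ ≤ T) {A B C P F : ℝ → ℝ} {a b u₀ : ℝ}
    (hAint : IntervalIntegrable A volume t₀ T)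
    (hBint : IntervalIntegrable B volume t₀ T)
    (hCint : IntervalIntegrable C volume t₀ T)
    (hPint : IntervalIntegrable P volume t₀ T)
    (hFint : IntervalIntegrable F volume t₀ T)
    (hsplit : ∀ s, B s + (1 / 2) * C s = F s - P s)
    (hFTC : (∫ s in t₀..T, F s) = b - u₀)
    (hPnn : 0 ≤ ∫ s in t₀..T, P s)
    (hbh : b ≤ a) :
    (∫ s in t₀..T, ((1 / 2) * A s - B s - (1 / 2) * C s)) + 2 * a
      ≥ (1 / 2) * (∫ s in t₀..T, A s) + a + u₀ := by
  have e1 : (∫ s in t₀..T, ((1 / 2) * A s - B s - (1 / 2) * C s))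
      = (1 / 2) * (∫ s in t₀..T, A s) - (∫ s in t₀..T, B s)
        - (1 / 2) * (∫ s in t₀..T, C s) := by
    rw [intervalIntegral.integral_sub ((hAint.const_mul _).sub hBint) (hCint.const_mul _),
        intervalIntegral.integral_sub (hAint.const_mul _) hBint,
        intervalIntegral.integral_const_mul, intervalIntegral.integral_const_mul]
  have e2 : (∫ s in t₀..T, B s) + (1 / 2) * (∫ s in t₀..T, C s)
      = (b - u₀) - (∫ s in t₀..T, P s) := by
    have h0 : Set.EqOn (fun s => B s + (1 / 2) * C s) (fun s => F s - P s)
        (Set.uIcc t₀ T) := fun s _ => hsplit s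
    have := intervalIntegral.integral_congr (μ := volume) h0
    rw [intervalIntegral.integral_add hBint (hCint.const_mul _),
        intervalIntegral.integral_const_mul,
        intervalIntegral.integral_sub hFint hPint, hFTC] at this
    linarith [this]
  linarith [hPnn, hbh, e1, e2]


set_option maxHeartbeats 1000000 in
/-- The deterministic lower bound in the proof of asymptotic optimality of the Regime 1
importance sampling scheme: the limiting controlled cost is bounded below by
`S(φ) + h(φ(T)) + Ū(t₀, x₀)`, where `S` is the Regime 1 rate functional. -/
theorem stmt4 (m : ℕ) (hm : 0 < m) (T t₀ : ℝ) (hT : 0 < T) (ht₀ : t₀ ∈ Set.Icc 0 T)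
    (x₀ : EuclideanSpace ℝ (Fin m))
    (r : EuclideanSpace ℝ (Fin m) → EuclideanSpace ℝ (Fin m)) (hr : Continuous r)
    (q : EuclideanSpace ℝ (Fin m) → Matrix (Fin m) (Fin m) ℝ)
    (hqc : ∀ i j, Continuous fun x => q x i j) (hqpd : ∀ x, (q x).PosDef)
    (h : EuclideanSpace ℝ (Fin m) → ℝ)
    (U : ℝ → EuclideanSpace ℝ (Fin m) → ℝ)
    (hU : ContDiff ℝ 1 (fun sx : ℝ × EuclideanSpace ℝ (Fin m) => U sx.1 sx.2))
    (hsub : ∀ s ∈ Set.Ioo (0 : ℝ) T, ∀ x,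
      deriv (fun t => U t x) s + ⟪r x, gradient (U s) x⟫
        - (1 / 2) * ⟪gradient (U s) x, matVec (q x) (gradient (U s) x)⟫ ≥ 0)
    (hterm : ∀ x, U T x ≤ h x)
    (φ φ' : ℝ → EuclideanSpace ℝ (Fin m))
    (hφd : ∀ s ∈ Set.Icc t₀ T, HasDerivAt φ (φ' s) s)
    (hφ'c : ContinuousOn φ' (Set.Icc t₀ T))
    (hφ0 : φ t₀ = x₀) :
    (∫ s in t₀..T,
        ((1 / 2) * ⟪φ' s - r (φ s), matVec (q (φ s))⁻¹ (φ' s - r (φ s))⟫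
          - ⟪φ' s - r (φ s), gradient (U s) (φ s)⟫
          - (1 / 2) * ⟪gradient (U s) (φ s), matVec (q (φ s)) (gradient (U s) (φ s))⟫))
      + 2 * h (φ T)
    ≥ (1 / 2) * (∫ s in t₀..T,
        ⟪φ' s - r (φ s), matVec (q (φ s))⁻¹ (φ' s - r (φ s))⟫)
      + h (φ T) + U t₀ x₀ := by
  have htT : t₀ ≤ T := ht₀.2
  have hGd : Differentiable ℝ (fun sx : ℝ × EuclideanSpace ℝ (Fin m) => U sx.1 sx.2) :=
    hU.differentiable one_ne_zero
  have hLc : Continuous (fun p : ℝ × EuclideanSpace ℝ (Fin m) =>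
      fderiv ℝ (fun sx : ℝ × EuclideanSpace ℝ (Fin m) => U sx.1 sx.2) p) :=
    hU.continuous_fderiv one_ne_zero
  have hφc : ContinuousOn φ (Set.Icc t₀ T) := fun s hs =>
    (hφd s hs).continuousAt.continuousWithinAt
  have hpair : ContinuousOn (fun s => ((s, φ s) : ℝ × EuclideanSpace ℝ (Fin m)))
      (Set.Icc t₀ T) := ContinuousOn.prodMk continuousOn_id hφc
  have hLφ : ContinuousOn (fun s => fderiv ℝ
      (fun sx : ℝ × EuclideanSpace ℝ (Fin m) => U sx.1 sx.2) (s, φ s)) (Set.Icc t₀ T) :=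
    hLc.comp_continuousOn hpair
  have hgc : ContinuousOn (fun s => gradient (U s) (φ s)) (Set.Icc t₀ T) := by
    have he : (fun s => gradient (U s) (φ s)) = fun s =>
        (InnerProductSpace.toDual ℝ (EuclideanSpace ℝ (Fin m))).symm
          ((fderiv ℝ (fun sx : ℝ × EuclideanSpace ℝ (Fin m) => U sx.1 sx.2) (s, φ s)).comp
            (ContinuousLinearMap.inr ℝ ℝ (EuclideanSpace ℝ (Fin m)))) :=
      funext fun s => grad_eq hU s (φ s)
    rw [he]
    exact (InnerProductSpace.toDual ℝ
      (EuclideanSpace ℝ (Fin m))).symm.continuous.comp_continuousOn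
        (hLφ.clm_comp continuousOn_const)
  have hrφ : ContinuousOn (fun s => φ' s - r (φ s)) (Set.Icc t₀ T) :=
    hφ'c.sub (hr.comp_continuousOn hφc)
  have hmv1 : ContinuousOn (fun s => matVec (q (φ s))⁻¹ (φ' s - r (φ s))) (Set.Icc t₀ T) :=
    continuousOn_matVec
      (fun i j => ((continuous_qinv q hqc hqpd).matrix_elem i j).comp_continuousOn hφc)
      (fun j => (continuous_apply j).comp_continuousOn ((PiLp.continuous_ofLp 2 _).comp_continuousOn hrφ))
  have hmv2 : ContinuousOn (fun s => matVec (q (φ s)) (gradient (U s) (φ s)))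
      (Set.Icc t₀ T) :=
    continuousOn_matVec (fun i j => (hqc i j).comp_continuousOn hφc)
      (fun j => (continuous_apply j).comp_continuousOn ((PiLp.continuous_ofLp 2 _).comp_continuousOn hgc))
  have hAc : ContinuousOn
      (fun s => (⟪φ' s - r (φ s), matVec (q (φ s))⁻¹ (φ' s - r (φ s))⟫ : ℝ))
      (Set.Icc t₀ T) := hrφ.inner hmv1
  have hBc : ContinuousOn (fun s => (⟪φ' s - r (φ s), gradient (U s) (φ s)⟫ : ℝ))
      (Set.Icc t₀ T) := hrφ.inner hgc
  have hCc : ContinuousOn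
      (fun s => (⟪gradient (U s) (φ s), matVec (q (φ s)) (gradient (U s) (φ s))⟫ : ℝ))
      (Set.Icc t₀ T) := hgc.inner hmv2
  have hDtc : ContinuousOn (fun s => deriv (fun t => U t (φ s)) s) (Set.Icc t₀ T) := by
    have he : (fun s => deriv (fun t => U t (φ s)) s) = fun s =>
        fderiv ℝ (fun sx : ℝ × EuclideanSpace ℝ (Fin m) => U sx.1 sx.2) (s, φ s)
          ((1 : ℝ), (0 : EuclideanSpace ℝ (Fin m))) :=
      funext fun s => partial_t_eq hU s (φ s)
    rw [he]
    exact hLφ.clm_apply continuousOn_const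
  have hPc : ContinuousOn (fun s => deriv (fun t => U t (φ s)) s
      + ⟪r (φ s), gradient (U s) (φ s)⟫
      - (1 / 2) * ⟪gradient (U s) (φ s), matVec (q (φ s)) (gradient (U s) (φ s))⟫)
      (Set.Icc t₀ T) :=
    (hDtc.add ((hr.comp_continuousOn hφc).inner hgc)).sub (continuousOn_const.mul hCc)
  have hFc : ContinuousOn (fun s =>
      fderiv ℝ (fun sx : ℝ × EuclideanSpace ℝ (Fin m) => U sx.1 sx.2) (s, φ s)
        ((1 : ℝ), φ' s)) (Set.Icc t₀ T) :=
    hLφ.clm_apply (ContinuousOn.prodMk continuousOn_const hφ'c)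
  -- interval integrability
  have hAint := hAc.intervalIntegrable_of_Icc (μ := volume) htT
  have hBint := hBc.intervalIntegrable_of_Icc (μ := volume) htT
  have hCint := hCc.intervalIntegrable_of_Icc (μ := volume) htT
  have hPint := hPc.intervalIntegrable_of_Icc (μ := volume) htT
  have hFint := hFc.intervalIntegrable_of_Icc (μ := volume) htT
  -- FTC
  have hFTC : (∫ s in t₀..T,
      fderiv ℝ (fun sx : ℝ × EuclideanSpace ℝ (Fin m) => U sx.1 sx.2) (s, φ s)
        ((1 : ℝ), φ' s)) = U T (φ T) - U t₀ x₀ := by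
    rw [← hφ0]
    refine intervalIntegral.integral_eq_sub_of_hasDerivAt (f := fun u => U u (φ u)) ?_ hFint
    intro s hs
    rw [Set.uIcc_of_le htT] at hs
    exact (hGd (s, φ s)).hasFDerivAt.comp_hasDerivAt s (HasDerivAt.prodMk (hasDerivAt_id s) (hφd s hs))
  -- pointwise split
  have hsplit : ∀ s, (⟪φ' s - r (φ s), gradient (U s) (φ s)⟫ : ℝ)
      + (1 / 2) * ⟪gradient (U s) (φ s), matVec (q (φ s)) (gradient (U s) (φ s))⟫
      = (fderiv ℝ (fun sx : ℝ × EuclideanSpace ℝ (Fin m) => U sx.1 sx.2) (s, φ s)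
          ((1 : ℝ), φ' s))
        - (deriv (fun t => U t (φ s)) s + ⟪r (φ s), gradient (U s) (φ s)⟫
          - (1 / 2) * ⟪gradient (U s) (φ s), matVec (q (φ s)) (gradient (U s) (φ s))⟫) := by
    intro s
    have h1 : fderiv ℝ (fun sx : ℝ × EuclideanSpace ℝ (Fin m) => U sx.1 sx.2) (s, φ s)
        ((1 : ℝ), φ' s) = deriv (fun t => U t (φ s)) s + ⟪gradient (U s) (φ s), φ' s⟫ := by
      have he : ((1 : ℝ), φ' s) = ((1 : ℝ), (0 : EuclideanSpace ℝ (Fin m)))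
          + ((0 : ℝ), φ' s) := by simp
      rw [he, map_add, ← partial_t_eq hU, ← inner_grad_eq hU]
    rw [h1, inner_sub_left, real_inner_comm (gradient (U s) (φ s)) (φ' s)]
    ring
  -- nonnegativity of P
  have hPnn : 0 ≤ ∫ s in t₀..T, (deriv (fun t => U t (φ s)) s
      + ⟪r (φ s), gradient (U s) (φ s)⟫
      - (1 / 2) * ⟪gradient (U s) (φ s), matVec (q (φ s)) (gradient (U s) (φ s))⟫) := by
    apply intervalIntegral.integral_nonneg_of_ae_restrict htT
    rw [← Measure.restrict_congr_set Ioo_ae_eq_Icc]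
    refine (ae_restrict_iff' measurableSet_Ioo).2 (ae_of_all _ fun s hs => ?_)
    exact hsub s ⟨lt_of_le_of_lt ht₀.1 hs.1, hs.2⟩ (φ s)
  exact stmt4_aux htT hAint hBint hCint hPint hFint hsplit hFTC hPnn (hterm (φ T))
end

section
/- Let T > 0, M > 0, x₀ ∈ ℝ^m, and s₀ ≥ 0. Let r : ℝ^m → ℝ^m be measurable with ‖r(x)‖ ≤ M for all x, and let q : ℝ^m → ℝ^{m×m} be measurable with each q(x) symmetric positive definite satisfying ⟨ξ, q(x)⁻¹ ξ⟩ ≥ ‖ξ‖²/M for all ξ ∈ ℝ^m and x ∈ ℝ^m. Suppose φ : [0,T] → ℝ^m has the form φ(t) = x₀ + ∫₀^t g(s) ds for a locally integrable g : [0,T] → ℝ^m, and that (1/2)∫₀^T ⟨g(s) − r(φ(s)), q(φ(s))⁻¹ (g(s) − r(φ(s)))⟩ ds ≤ s₀. Then for all 0 ≤ t₁ ≤ t₂ ≤ T, ‖φ(t₂) − φ(t₁)‖ ≤ M (t₂ − t₁) + √(2 M s₀) · √(t₂ − t₁). -/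
set_option maxHeartbeats 400000

open MeasureTheory Matrix
open scoped ENNReal

lemma euc_norm_eq (m : ℕ) (v : Fin m → ℝ) :
    ‖((EuclideanSpace.equiv (Fin m) ℝ).symm : (Fin m → ℝ) →L[ℝ] EuclideanSpace ℝ (Fin m)) v‖
      = Real.sqrt (v ⬝ᵥ v) := by
  rw [EuclideanSpace.norm_eq]
  congr 1
  simp [dotProduct, Real.norm_eq_abs, sq_abs, sq]

lemma dot_self_nonneg (m : ℕ) (v : Fin m → ℝ) : 0 ≤ v ⬝ᵥ v :=
  Finset.sum_nonneg fun _ _ => mul_self_nonneg _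

/-- Uniform Hölder-1/2 equicontinuity on sublevel sets of the Regime 1 action functional:
if `φ(t) = x₀ + ∫₀ᵗ g(s) ds` and `(1/2)∫₀^T ⟨g − r(φ), q(φ)⁻¹(g − r(φ))⟩ ds ≤ s₀`, with
`‖r‖ ≤ M` and `⟨ξ, q(x)⁻¹ξ⟩ ≥ ‖ξ‖²/M`, then
`‖φ(t₂) − φ(t₁)‖ ≤ M(t₂ − t₁) + √(2Ms₀)·√(t₂ − t₁)`. -/
theorem stmt15 (m : ℕ) (hm : 0 < m) (T M s₀ : ℝ) (hT : 0 < T) (hM : 0 < M) (hs₀ : 0 ≤ s₀)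
    (x₀ : Fin m → ℝ)
    (r : (Fin m → ℝ) → (Fin m → ℝ)) (hrmeas : ∀ i, Measurable fun x => r x i)
    (hrbd : ∀ x, r x ⬝ᵥ r x ≤ M ^ 2)
    (q : (Fin m → ℝ) → Matrix (Fin m) (Fin m) ℝ)
    (hqmeas : ∀ i j, Measurable fun x => q x i j)
    (hqpd : ∀ x, (q x).PosDef)
    (hqlb : ∀ x (ξ : Fin m → ℝ), (ξ ⬝ᵥ ξ) / M ≤ ξ ⬝ᵥ ((q x)⁻¹ *ᵥ ξ))
    (g : ℝ → Fin m → ℝ) (hg : IntegrableOn g (Set.Icc 0 T))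
    (φ : ℝ → Fin m → ℝ) (hφ : ∀ t, φ t = x₀ + ∫ s in (0:ℝ)..t, g s)
    (haction : (1 / 2 : ℝ≥0∞) * ∫⁻ s in Set.Icc (0:ℝ) T,
        ENNReal.ofReal ((g s - r (φ s)) ⬝ᵥ ((q (φ s))⁻¹ *ᵥ (g s - r (φ s))))
      ≤ ENNReal.ofReal s₀) :
    ∀ t₁ t₂ : ℝ, 0 ≤ t₁ → t₁ ≤ t₂ → t₂ ≤ T →
      Real.sqrt ((φ t₂ - φ t₁) ⬝ᵥ (φ t₂ - φ t₁))
        ≤ M * (t₂ - t₁) + Real.sqrt (2 * M * s₀) * Real.sqrt (t₂ - t₁) := by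
  intro t₁ t₂ ht₁ ht₁₂ ht₂
  set L : (Fin m → ℝ) →L[ℝ] EuclideanSpace ℝ (Fin m) :=
    ((EuclideanSpace.equiv (Fin m) ℝ).symm : (Fin m → ℝ) →L[ℝ] EuclideanSpace ℝ (Fin m)) with hL
  set h : ℝ → (Fin m → ℝ) := fun s => g s - r (φ s) with hh
  have hsub : Set.Icc t₁ t₂ ⊆ Set.Icc 0 T := Set.Icc_subset_Icc ht₁ ht₂
  -- r is bounded in Euclidean and sup norm
  have hrE : ∀ x, Real.sqrt (r x ⬝ᵥ r x) ≤ M := fun x => by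
    calc Real.sqrt (r x ⬝ᵥ r x) ≤ Real.sqrt (M ^ 2) := Real.sqrt_le_sqrt (hrbd x)
    _ = M := by rw [Real.sqrt_sq hM.le]
  have hrsup : ∀ x, ‖r x‖ ≤ M := by
    intro x
    rw [pi_norm_le_iff_of_nonneg hM.le]
    intro i
    rw [Real.norm_eq_abs, ← Real.sqrt_sq_eq_abs]
    refine le_trans (Real.sqrt_le_sqrt ?_) (hrE x)
    have : r x i ^ 2 ≤ ∑ j, r x j * r x j :=
      Finset.single_le_sum (f := fun j => r x j * r x j)
        (fun j _ => mul_self_nonneg _) (Finset.mem_univ i) |>.trans_eq' (by ring_nf)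
    simpa [dotProduct] using this
  -- measurability of φ on Icc 0 T
  have hφcont : ContinuousOn φ (Set.Icc 0 T) := by
    have hc : ContinuousOn (fun t => x₀ + ∫ s in Set.Ioc 0 t, g s) (Set.Icc 0 T) :=
      continuousOn_const.add (intervalIntegral.continuousOn_primitive hg)
    refine hc.congr fun t ht => ?_
    rw [hφ t, intervalIntegral.integral_of_le ht.1]
  have hφae : AEMeasurable φ (volume.restrict (Set.Icc 0 T)) :=
    ContinuousOn.aemeasurable hφcont measurableSet_Icc
  have hrmeas' : Measurable r := measurable_pi_iff.2 hrmeas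
  have hrφae : AEMeasurable (fun s => r (φ s)) (volume.restrict (Set.Icc 0 T)) :=
    hrmeas'.comp_aemeasurable hφae
  have hrφint : IntegrableOn (fun s => r (φ s)) (Set.Icc 0 T) := by
    refine Integrable.mono' (integrable_const M) hrφae.aestronglyMeasurable ?_
    filter_upwards with s using hrsup _
  have hhint : IntegrableOn h (Set.Icc 0 T) := hg.sub hrφint
  have hhint12 : IntegrableOn h (Set.Icc t₁ t₂) := hhint.mono_set hsub
  have hrφint12 : IntegrableOn (fun s => r (φ s)) (Set.Icc t₁ t₂) := hrφint.mono_set hsub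
  -- representation of the increment
  have hII : ∀ t, 0 ≤ t → t ≤ T → IntervalIntegrable g volume 0 t := by
    intro t h0 hT'
    rw [intervalIntegrable_iff_integrableOn_Icc_of_le h0]
    exact hg.mono_set (Set.Icc_subset_Icc le_rfl hT')
  have hrep : φ t₂ - φ t₁ = ∫ s in Set.Icc t₁ t₂, g s := by
    rw [hφ t₂, hφ t₁, add_sub_add_left_eq_sub,
      intervalIntegral.integral_interval_sub_left (hII t₂ (ht₁.trans ht₁₂) ht₂)
        (hII t₁ ht₁ (ht₁₂.trans ht₂)),
      intervalIntegral.integral_of_le ht₁₂, MeasureTheory.integral_Icc_eq_integral_Ioc]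
  have hsplit : (∫ s in Set.Icc t₁ t₂, g s)
      = (∫ s in Set.Icc t₁ t₂, h s) + ∫ s in Set.Icc t₁ t₂, r (φ s) := by
    rw [← integral_add hhint12 hrφint12]
    refine integral_congr_ae (Filter.Eventually.of_forall fun s => ?_)
    simp [hh]
  -- the key L² bound
  have key : ∫⁻ s in Set.Icc (0:ℝ) T, ENNReal.ofReal (h s ⬝ᵥ h s)
      ≤ ENNReal.ofReal (2 * M * s₀) := by
    have h1 : ∫⁻ s in Set.Icc (0:ℝ) T,
        ENNReal.ofReal (h s ⬝ᵥ ((q (φ s))⁻¹ *ᵥ h s)) ≤ ENNReal.ofReal (2 * s₀) := by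
      calc (∫⁻ s in Set.Icc (0:ℝ) T, ENNReal.ofReal (h s ⬝ᵥ ((q (φ s))⁻¹ *ᵥ h s)))
          = 2 * ((1/2 : ℝ≥0∞) * ∫⁻ s in Set.Icc (0:ℝ) T,
              ENNReal.ofReal (h s ⬝ᵥ ((q (φ s))⁻¹ *ᵥ h s))) := by
            rw [← mul_assoc, one_div, ENNReal.mul_inv_cancel two_ne_zero ENNReal.ofNat_ne_top,
              one_mul]
        _ ≤ 2 * ENNReal.ofReal s₀ := mul_le_mul_right haction 2
        _ = ENNReal.ofReal (2 * s₀) := by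
            rw [ENNReal.ofReal_mul (by norm_num : (0:ℝ) ≤ 2), ENNReal.ofReal_ofNat]
    calc ∫⁻ s in Set.Icc (0:ℝ) T, ENNReal.ofReal (h s ⬝ᵥ h s)
        ≤ ∫⁻ s in Set.Icc (0:ℝ) T,
            ENNReal.ofReal M * ENNReal.ofReal (h s ⬝ᵥ ((q (φ s))⁻¹ *ᵥ h s)) := by
          refine lintegral_mono fun s => ?_
          rw [← ENNReal.ofReal_mul hM.le]
          refine ENNReal.ofReal_le_ofReal ?_
          have := hqlb (φ s) (h s)
          rw [div_le_iff₀ hM] at this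
          linarith [this]
      _ = ENNReal.ofReal M * ∫⁻ s in Set.Icc (0:ℝ) T,
            ENNReal.ofReal (h s ⬝ᵥ ((q (φ s))⁻¹ *ᵥ h s)) := lintegral_const_mul' _ _ ENNReal.ofReal_ne_top
      _ ≤ ENNReal.ofReal M * ENNReal.ofReal (2 * s₀) := mul_le_mul_right h1 _
      _ = ENNReal.ofReal (2 * M * s₀) := by
          rw [← ENNReal.ofReal_mul hM.le]; ring_nf
  have key12 : ∫⁻ s in Set.Icc t₁ t₂, ENNReal.ofReal (h s ⬝ᵥ h s)
      ≤ ENNReal.ofReal (2 * M * s₀) :=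
    le_trans (lintegral_mono_set hsub) key
  -- Cauchy–Schwarz giving the bound on ∫ ‖h‖
  have hhae12 : AEMeasurable h (volume.restrict (Set.Icc t₁ t₂)) :=
    hhint12.aemeasurable
  have hFae : AEMeasurable (fun s => ENNReal.ofReal ‖L (h s)‖)
      (volume.restrict (Set.Icc t₁ t₂)) :=
    ENNReal.measurable_ofReal.comp_aemeasurable
      ((L.continuous.measurable.comp_aemeasurable hhae12).norm)
  have hCS : ∫⁻ s in Set.Icc t₁ t₂, ENNReal.ofReal ‖L (h s)‖
      ≤ (∫⁻ s in Set.Icc t₁ t₂, ENNReal.ofReal ‖L (h s)‖ ^ (2:ℝ)) ^ (1/2:ℝ)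
        * (volume (Set.Icc t₁ t₂)) ^ (1/2:ℝ) := by
    have hconj : (2:ℝ).HolderConjugate 2 := Real.HolderConjugate.two_two
    have := ENNReal.lintegral_mul_le_Lp_mul_Lq (volume.restrict (Set.Icc t₁ t₂)) hconj
      hFae aemeasurable_const (g := fun _ => 1)
    simpa using this
  have hsq : ∀ s, ENNReal.ofReal ‖L (h s)‖ ^ (2:ℝ) = ENNReal.ofReal (h s ⬝ᵥ h s) := by
    intro s
    rw [ENNReal.ofReal_rpow_of_nonneg (norm_nonneg _) (by norm_num : (0:ℝ) ≤ 2)]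
    congr 1
    rw [euc_norm_eq, Real.rpow_two, Real.sq_sqrt (dot_self_nonneg m _)]
  have hNbound : (∫ s in Set.Icc t₁ t₂, ‖L (h s)‖)
      ≤ Real.sqrt (2 * M * s₀) * Real.sqrt (t₂ - t₁) := by
    rw [MeasureTheory.integral_eq_lintegral_of_nonneg_ae
      (Filter.Eventually.of_forall fun s => norm_nonneg _)
      ((L.continuous.comp_aestronglyMeasurable hhint12.aestronglyMeasurable).norm)]
    have hle : ∫⁻ s in Set.Icc t₁ t₂, ENNReal.ofReal ‖L (h s)‖
        ≤ ENNReal.ofReal (2 * M * s₀) ^ (1/2:ℝ) * ENNReal.ofReal (t₂ - t₁) ^ (1/2:ℝ) := by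
      refine hCS.trans ?_
      gcongr
      · simp_rw [hsq]; exact key12
      · rw [Real.volume_Icc]
    refine le_trans (ENNReal.toReal_mono ?_ hle) ?_
    · exact ENNReal.mul_ne_top (ENNReal.rpow_ne_top_of_nonneg (by norm_num) ENNReal.ofReal_ne_top)
        (ENNReal.rpow_ne_top_of_nonneg (by norm_num) ENNReal.ofReal_ne_top)
    · rw [ENNReal.toReal_mul, ← ENNReal.toReal_rpow, ← ENNReal.toReal_rpow,
        ENNReal.toReal_ofReal (by positivity), ENNReal.toReal_ofReal (by linarith),
        ← Real.sqrt_eq_rpow, ← Real.sqrt_eq_rpow]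
  -- bound on the r part
  have hRbound : ‖∫ s in Set.Icc t₁ t₂, L (r (φ s))‖ ≤ M * (t₂ - t₁) := by
    have := MeasureTheory.norm_integral_le_of_norm_le_const
      (μ := volume.restrict (Set.Icc t₁ t₂)) (C := M)
      (f := fun s => L (r (φ s)))
      (Filter.Eventually.of_forall fun s => by rw [euc_norm_eq]; exact hrE _)
    rw [measureReal_restrict_apply_univ, Real.volume_real_Icc,
      max_eq_left (by linarith)] at this
    exact this
  -- put everything together
  rw [← euc_norm_eq, hrep, hsplit, map_add]
  rw [← L.integral_comp_comm hhint12, ← L.integral_comp_comm hrφint12]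
  refine le_trans (norm_add_le _ _) ?_
  rw [add_comm]
  refine add_le_add hRbound ?_
  exact le_trans (norm_integral_le_integral_norm _) hNbound
end
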